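/- arXiv:1107.4532 — 2 statements merged into one kernel-verified Lean document; each statement's English description precedes it below -/
import Mathlib

section
/- Let C be a polyhedral cone with non-empty interior in a finite dimensional real vector space V, and suppose C has exactly m faces (including {0} and C itself). Then: (i) for every order-preserving homogeneous map f : C → C, the cone spectrum σ_C(f) contains at most m − 1 elements; and (ii) there exists a continuous order-preserving homogeneous map g : C → C whose cone spectrum contains exactly m − 1 distinct elements. -/
open Filter Topology Set

noncomputable section

variable {V : Type*} [NormedAddCommGroup V] [NormedSpace ℝ V] [FiniteDimensional ℝ V]

/-- `C` is a closed cone in `V`: closed, convex, invariant under nonnegative scaling,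
and `C ∩ (-C) = {0}`. -/
def IsClosedCone (C : Set V) : Prop :=
  IsClosed C ∧ Convex ℝ C ∧ (∀ a : ℝ, 0 ≤ a → ∀ x ∈ C, a • x ∈ C) ∧
    ∀ x ∈ C, -x ∈ C → x = 0

/-- The partial order induced by the cone `C`: `x ≤ y` iff `y - x ∈ C`. -/
def coneLE (C : Set V) (x y : V) : Prop := y - x ∈ C

/-- `f` is homogeneous of degree one on `C`. -/
def IsHomog (C : Set V) (f : V → V) : Prop :=
  ∀ a : ℝ, 0 ≤ a → ∀ x ∈ C, f (a • x) = a • f x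

/-- `f` is order-preserving on `C` with respect to the cone order. -/
def IsOrdPres (C : Set V) (f : V → V) : Prop :=
  ∀ x ∈ C, ∀ y ∈ C, coneLE C x y → coneLE C (f x) (f y)

/-- `C` is a polyhedral cone: an intersection of finitely many closed half-spaces. -/
def IsPolyhedral (C : Set V) : Prop :=
  ∃ (m : ℕ) (φ : Fin m → V →ₗ[ℝ] ℝ), C = {x : V | ∀ i, 0 ≤ φ i x}

/-- The cone spectrum `σ_C(f) = {ρ ≥ 0 : f x = ρ • x for some x ∈ C, x ≠ 0}`. -/
def coneSpectrum (C : Set V) (f : V → V) : Set ℝ :=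
  {ρ : ℝ | 0 ≤ ρ ∧ ∃ x ∈ C, x ≠ 0 ∧ f x = ρ • x}

/-- `F` is a face of the cone `C`: a non-empty convex subset of `C` such that whenever
`x, y ∈ C` and `(1-λ)x + λy ∈ F` for some `0 < λ < 1`, then `x, y ∈ F`. -/
def IsFace (C F : Set V) : Prop :=
  F.Nonempty ∧ Convex ℝ F ∧ F ⊆ C ∧
    ∀ x ∈ C, ∀ y ∈ C, ∀ t : ℝ, 0 < t → t < 1 →
      (1 - t) • x + t • y ∈ F → x ∈ F ∧ y ∈ F

set_option linter.unusedSectionVars false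
set_option linter.deprecated false

namespace PolyAux

attribute [local instance] Classical.propDecidable

variable {V : Type*} [NormedAddCommGroup V] [NormedSpace ℝ V] [FiniteDimensional ℝ V]
variable {n : ℕ}

/-- the polyhedral cone determined by functionals -/
def K (φ : Fin n → V →ₗ[ℝ] ℝ) : Set V := {x | ∀ i, 0 ≤ φ i x}

/-- zero set of x -/
def Zs (φ : Fin n → V →ₗ[ℝ] ℝ) (x : V) : Finset (Fin n) :=
  Finset.univ.filter (fun i => φ i x = 0)

variable (φ : Fin n → V →ₗ[ℝ] ℝ)

lemma mem_K {x : V} : x ∈ K φ ↔ ∀ i, 0 ≤ φ i x := Iff.rfl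

lemma mem_Zs {x : V} {i : Fin n} : i ∈ Zs φ x ↔ φ i x = 0 := by
  simp [Zs]

lemma K_zero : (0 : V) ∈ K φ := by simp [mem_K]

lemma K_add {x y : V} (hx : x ∈ K φ) (hy : y ∈ K φ) : x + y ∈ K φ := by
  intro i; simp only [map_add]; exact add_nonneg (hx i) (hy i)

lemma K_smul {a : ℝ} (ha : 0 ≤ a) {x : V} (hx : x ∈ K φ) : a • x ∈ K φ := by
  intro i; simp only [map_smul, smul_eq_mul]; exact mul_nonneg ha (hx i)

lemma K_closed : IsClosed (K φ) := by
  have : K φ = ⋂ i, {x : V | 0 ≤ φ i x} := by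
    ext x; simp [mem_K]
  rw [this]
  exact isClosed_iInter fun i =>
    isClosed_le continuous_const (φ i).continuous_of_finiteDimensional

lemma Zs_pos {x : V} (hx : x ∈ K φ) {i : Fin n} (hi : i ∉ Zs φ x) : 0 < φ i x :=
  lt_of_le_of_ne (hx i) (fun h => hi (mem_Zs φ |>.2 h.symm))

lemma Zs_add {x y : V} (hx : x ∈ K φ) (hy : y ∈ K φ) :
    Zs φ (x + y) = Zs φ x ∩ Zs φ y := by
  ext i
  simp only [mem_Zs, Finset.mem_inter, map_add]
  constructor
  · intro h; constructor <;> linarith [hx i, hy i]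
  · rintro ⟨h1, h2⟩; rw [h1, h2, add_zero]

/-- L1: if the zero set of x is contained in that of y, then x - εy ∈ K for small ε -/
lemma exists_pos_sub_mem {x y : V} (hx : x ∈ K φ) (_hy : y ∈ K φ)
    (h : Zs φ x ⊆ Zs φ y) : ∃ ε : ℝ, 0 < ε ∧ x - ε • y ∈ K φ := by
  classical
  set s := Finset.univ \ Zs φ x with hs
  rcases s.eq_empty_or_nonempty with he | hne
  · refine ⟨1, one_pos, fun i => ?_⟩
    have hi : i ∈ Zs φ x := by
      by_contra hi
      have : i ∈ s := by simp [hs, hi]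
      simp [he] at this
    have h1 : φ i x = 0 := (mem_Zs φ).1 hi
    have h2 : φ i y = 0 := (mem_Zs φ).1 (h hi)
    simp [map_sub, map_smul, h1, h2]
  · set ε := s.inf' hne (fun i => φ i x / max (φ i y) 1) with hε
    have hεpos : 0 < ε := by
      rw [hε, Finset.lt_inf'_iff]
      intro i hi
      have hix : i ∉ Zs φ x := by simp [hs] at hi; exact hi
      exact div_pos (Zs_pos φ hx hix) (lt_of_lt_of_le one_pos (le_max_right _ _))
    refine ⟨ε, hεpos, fun i => ?_⟩
    by_cases hi : i ∈ Zs φ x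
    · have h1 : φ i x = 0 := (mem_Zs φ).1 hi
      have h2 : φ i y = 0 := (mem_Zs φ).1 (h hi)
      simp [map_sub, map_smul, h1, h2]
    · have hi' : i ∈ s := by simp [hs, hi]
      have hle : ε ≤ φ i x / max (φ i y) 1 := Finset.inf'_le _ hi'
      have hmax : 0 < max (φ i y) 1 := lt_of_lt_of_le one_pos (le_max_right _ _)
      have h2 : ε * max (φ i y) 1 ≤ φ i x := by
        rw [← le_div_iff₀ hmax]; exact hle
      have h3 : ε * φ i y ≤ ε * max (φ i y) 1 :=
        mul_le_mul_of_nonneg_left (le_max_left _ _) hεpos.le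
      simp only [map_sub, map_smul, smul_eq_mul, sub_nonneg]
      linarith


/-! ### Face lemmas -/

section Faces

lemma face_zero_mem {F : Set V} (hF : IsFace (K φ) F) : (0 : V) ∈ F := by
  obtain ⟨x, hx⟩ := hF.1
  have hxK : x ∈ K φ := hF.2.2.1 hx
  have h2x : (2 : ℝ) • x ∈ K φ := K_smul φ (by norm_num) hxK
  have := hF.2.2.2 ((2:ℝ) • x) h2x 0 (K_zero φ) (1/2) (by norm_num) (by norm_num) ?_
  · exact this.2
  · have : (1 - 1/2 : ℝ) • ((2:ℝ) • x) + (1/2 : ℝ) • (0:V) = x := by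
      rw [smul_smul]; norm_num
    rw [this]; exact hx

lemma face_smul {F : Set V} (hF : IsFace (K φ) F) {z : V} (hz : z ∈ F)
    {a : ℝ} (ha : 0 ≤ a) : a • z ∈ F := by
  rcases eq_or_lt_of_le ha with rfl | hapos
  · simpa using face_zero_mem φ hF
  rcases le_or_gt a 1 with hle | hgt
  · have hcomb : a • z + (1 - a) • (0:V) ∈ F :=
      hF.2.1 hz (face_zero_mem φ hF) ha (by linarith) (by ring)
    simpa using hcomb
  · have hzK : z ∈ K φ := hF.2.2.1 hz
    have haz : a • z ∈ K φ := K_smul φ ha hzK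
    have ht0 : (0:ℝ) < 1 - 1/a := by
      rw [sub_pos, div_lt_one (by linarith)]; linarith
    have ht1 : (1:ℝ) - 1/a < 1 := by
      have : 0 < 1/a := by positivity
      linarith
    have := hF.2.2.2 (a • z) haz 0 (K_zero φ) (1 - 1/a) ht0 ht1 ?_
    · exact this.1
    · have : (1 - (1 - 1/a)) • (a • z) + (1 - 1/a) • (0:V) = z := by
        rw [smul_smul]
        have : (1 - (1 - 1/a)) * a = 1 := by field_simp; ring
        rw [this]; simp
      rw [this]; exact hz

lemma face_add {F : Set V} (hF : IsFace (K φ) F) {z w : V} (hz : z ∈ F) (hw : w ∈ F) :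
    z + w ∈ F := by
  have hhalf : (1/2 : ℝ) • z + (1/2 : ℝ) • w ∈ F :=
    hF.2.1 hz hw (by norm_num) (by norm_num) (by norm_num)
  have := face_smul φ hF hhalf (a := 2) (by norm_num)
  rw [smul_add, smul_smul, smul_smul] at this
  norm_num at this
  exact this

/-- the face generated by x -/
def faceOf (x : V) : Set V := {z ∈ K φ | Zs φ x ⊆ Zs φ z}

lemma mem_faceOf {x z : V} : z ∈ faceOf φ x ↔ z ∈ K φ ∧ Zs φ x ⊆ Zs φ z := Iff.rfl

lemma self_mem_faceOf {x : V} (hx : x ∈ K φ) : x ∈ faceOf φ x := ⟨hx, subset_rfl⟩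

lemma faceOf_isFace {x : V} (hx : x ∈ K φ) : IsFace (K φ) (faceOf φ x) := by
  refine ⟨⟨x, self_mem_faceOf φ hx⟩, ?_, fun z hz => hz.1, ?_⟩
  · rintro z hz w hw a b ha hb hab
    refine ⟨fun i => by
      simp only [map_add, map_smul, smul_eq_mul]
      have := hz.1 i; have := hw.1 i; nlinarith, fun i hi => ?_⟩
    have h1 : φ i z = 0 := (mem_Zs φ).1 (hz.2 hi)
    have h2 : φ i w = 0 := (mem_Zs φ).1 (hw.2 hi)
    simp [mem_Zs, h1, h2]
  · rintro u hu v hv t ht0 ht1 hm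
    have key : ∀ i ∈ Zs φ x, φ i u = 0 ∧ φ i v = 0 := by
      intro i hi
      have h0 : φ i ((1-t) • u + t • v) = 0 := (mem_Zs φ).1 (hm.2 hi)
      simp only [map_add, map_smul, smul_eq_mul] at h0
      have hu' := hu i; have hv' := hv i
      constructor <;> nlinarith
    exact ⟨⟨hu, fun i hi => (mem_Zs φ).2 (key i hi).1⟩,
      ⟨hv, fun i hi => (mem_Zs φ).2 (key i hi).2⟩⟩

/-- L3: membership in a face propagates along Z-set inclusion -/
lemma mem_face_of_Zs_subset {F : Set V} (hF : IsFace (K φ) F) {x y : V}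
    (hx : x ∈ F) (hy : y ∈ K φ) (h : Zs φ x ⊆ Zs φ y) : y ∈ F := by
  obtain ⟨ε, hεpos, hεmem⟩ := exists_pos_sub_mem φ (hF.2.2.1 hx) hy h
  have hu : (2:ℝ) • (x - ε • y) ∈ K φ := K_smul φ (by norm_num) hεmem
  have hw : (2*ε) • y ∈ K φ := K_smul φ (by positivity) hy
  have hcomb := hF.2.2.2 _ hu _ hw (1/2) (by norm_num) (by norm_num) ?_
  · have : ((2*ε)⁻¹ * (2*ε)) • y ∈ F := by
      rw [mul_smul]
      exact face_smul φ hF hcomb.2 (by positivity)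
    rwa [inv_mul_cancel₀ (by positivity), one_smul] at this
  · have : (1 - 1/2 : ℝ) • ((2:ℝ) • (x - ε • y)) + (1/2 : ℝ) • ((2*ε) • y) = x := by
      rw [smul_smul, smul_smul]
      norm_num
      module
    rw [this]; exact hx

/-- L4: every face is generated by one of its elements -/
lemma face_eq_faceOf {F : Set V} (hF : IsFace (K φ) F) :
    ∃ x ∈ F, F = faceOf φ x := by
  classical
  obtain ⟨x₀, hx₀⟩ := hF.1
  -- choose x in F with minimal Zs-cardinality
  have hne : {k : ℕ | ∃ z ∈ F, (Zs φ z).card = k}.Nonempty := ⟨_, x₀, hx₀, rfl⟩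
  obtain ⟨z, hzF, hzcard⟩ := Nat.sInf_mem hne
  have hmin : ∀ w ∈ F, Zs φ z ⊆ Zs φ w := by
    intro w hwF
    have hsum : z + w ∈ F := face_add φ hF hzF hwF
    have hZ : Zs φ (z + w) = Zs φ z ∩ Zs φ w :=
      Zs_add φ (hF.2.2.1 hzF) (hF.2.2.1 hwF)
    have hcard : (Zs φ z).card ≤ (Zs φ (z+w)).card := by
      rw [hzcard]
      exact Nat.sInf_le ⟨z + w, hsum, rfl⟩
    have hsub : Zs φ (z + w) ⊆ Zs φ z := by rw [hZ]; exact Finset.inter_subset_left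
    have heq : Zs φ (z + w) = Zs φ z := Finset.eq_of_subset_of_card_le hsub hcard
    rw [← heq, hZ]
    exact Finset.inter_subset_right
  refine ⟨z, hzF, Set.ext fun w => ?_⟩
  constructor
  · intro hw; exact ⟨hF.2.2.1 hw, hmin w hw⟩
  · rintro ⟨hwK, hZsub⟩
    exact mem_face_of_Zs_subset φ hF hzF hwK hZsub

lemma face_singleton_zero (hpt : ∀ x : V, (∀ i, φ i x = 0) → x = 0) :
    IsFace (K φ) ({0} : Set V) := by
  refine ⟨⟨0, rfl⟩, convex_singleton 0, by simp [K_zero], ?_⟩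
  rintro u hu v hv t ht0 ht1 hm
  simp only [Set.mem_singleton_iff] at hm ⊢
  have key : ∀ i, φ i u = 0 ∧ φ i v = 0 := by
    intro i
    have h0 : φ i ((1-t) • u + t • v) = 0 := by rw [hm]; simp
    simp only [map_add, map_smul, smul_eq_mul] at h0
    have hu' := hu i; have hv' := hv i
    constructor <;> nlinarith
  exact ⟨hpt u fun i => (key i).1, hpt v fun i => (key i).2⟩

end Faces


/-! ### Part (i): eigenvalue comparison -/

section PartI

variable {f : V → V}

lemma sigma_le (hpt : ∀ x : V, (∀ i, φ i x = 0) → x = 0)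
    (hmap : Set.MapsTo f (K φ) (K φ)) (hhom : IsHomog (K φ) f)
    (hord : IsOrdPres (K φ) f)
    {x y : V} (hx : x ∈ K φ) (hy : y ∈ K φ) (hx0 : x ≠ 0)
    {ρ σ : ℝ} (hρ : 0 ≤ ρ) (hσ : 0 ≤ σ)
    (hfx : f x = ρ • x) (hfy : f y = σ • y)
    {ε δ : ℝ} (hε : 0 < ε) (hδ : 0 < δ)
    (hεm : x - ε • y ∈ K φ) (hδm : y - δ • x ∈ K φ) : σ ≤ ρ := by
  by_contra hlt
  push_neg at hlt
  have hσpos : 0 < σ := lt_of_le_of_lt hρ hlt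
  -- key induction
  have key : ∀ N : ℕ, ρ ^ N • x - (ε * σ ^ N) • y ∈ K φ := by
    intro N
    induction N with
    | zero => simpa using hεm
    | succ N ih =>
      have h1 : (ε * σ ^ N) • y ∈ K φ := K_smul φ (by positivity) hy
      have h2 : ρ ^ N • x ∈ K φ := K_smul φ (by positivity) hx
      have := hord _ h1 _ h2 ih
      unfold coneLE at this
      rw [hhom _ (by positivity) _ hy, hhom _ (by positivity) _ hx, hfy, hfx] at this
      rw [smul_smul, smul_smul] at this
      have hgoal : ρ ^ (N+1) • x - (ε * σ ^ (N+1)) • y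
          = (ρ ^ N * ρ) • x - (ε * σ ^ N * σ) • y := by
        rw [pow_succ, pow_succ]; module
      rw [hgoal]; exact this
  have key2 : ∀ N : ℕ, (ρ ^ N - ε * δ * σ ^ N) • x ∈ K φ := by
    intro N
    have h1 := key N
    have h2 : (ε * σ ^ N) • (y - δ • x) ∈ K φ := K_smul φ (by positivity) hδm
    have := K_add φ h1 h2
    convert this using 1
    rw [smul_sub, smul_smul, sub_smul]
    module
  have key3 : ∀ N : ℕ, ((ρ/σ) ^ N - ε * δ) • x ∈ K φ := by
    intro N
    have h1 := K_smul φ (a := (σ ^ N)⁻¹) (by positivity) (key2 N)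
    rw [smul_smul] at h1
    convert h1 using 2
    rw [div_pow, div_eq_inv_mul, mul_sub, mul_comm (ε * δ) (σ ^ N), ← mul_assoc, inv_mul_cancel₀ (by positivity), one_mul]
  have hlim : Filter.Tendsto (fun N : ℕ => ((ρ/σ) ^ N - ε * δ) • x)
      Filter.atTop (nhds ((0 - ε * δ) • x)) := by
    refine Filter.Tendsto.smul_const ?_ x
    exact ((tendsto_pow_atTop_nhds_zero_of_lt_one (by positivity)
      ((div_lt_one hσpos).2 hlt)).sub tendsto_const_nhds)
  have hmem : (0 - ε * δ) • x ∈ K φ :=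
    (K_closed φ).mem_of_tendsto hlim (Filter.Eventually.of_forall key3)
  have hmem' : ∀ i, φ i ((ε * δ) • x) = 0 := by
    intro i
    have h1 := hmem i
    have h2 : (ε * δ) • x ∈ K φ := K_smul φ (by positivity) hx
    have h3 := h2 i
    rw [show (0 - ε * δ) • x = -((ε * δ) • x) by module, map_neg] at h1
    linarith
  have := hpt _ hmem'
  rw [smul_eq_zero] at this
  rcases this with h | h
  · nlinarith
  · exact hx0 h

lemma eigen_eq_of_Zs_eq (hpt : ∀ x : V, (∀ i, φ i x = 0) → x = 0)
    (hmap : Set.MapsTo f (K φ) (K φ)) (hhom : IsHomog (K φ) f)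
    (hord : IsOrdPres (K φ) f)
    {x y : V} (hx : x ∈ K φ) (hy : y ∈ K φ) (hx0 : x ≠ 0) (hy0 : y ≠ 0)
    {ρ σ : ℝ} (hρ : 0 ≤ ρ) (hσ : 0 ≤ σ)
    (hfx : f x = ρ • x) (hfy : f y = σ • y)
    (hZ : Zs φ x = Zs φ y) : ρ = σ := by
  obtain ⟨ε, hε, hεm⟩ := exists_pos_sub_mem φ hx hy (hZ ▸ subset_rfl)
  obtain ⟨δ, hδ, hδm⟩ := exists_pos_sub_mem φ hy hx (hZ ▸ subset_rfl)
  have h1 := sigma_le φ hpt hmap hhom hord hx hy hx0 hρ hσ hfx hfy hε hδ hεm hδm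
  have h2 := sigma_le φ hpt hmap hhom hord hy hx hy0 hσ hρ hfy hfx hδ hε hδm hεm
  linarith

/-- the set of admissible zero-patterns -/
def Jset : Set (Finset (Fin n)) := {I | ∃ x, x ∈ K φ ∧ x ≠ 0 ∧ Zs φ x = I}

lemma partI (hpt : ∀ x : V, (∀ i, φ i x = 0) → x = 0)
    (hmap : Set.MapsTo f (K φ) (K φ)) (hhom : IsHomog (K φ) f)
    (hord : IsOrdPres (K φ) f) :
    (coneSpectrum (K φ) f).Finite ∧
      (coneSpectrum (K φ) f).ncard ≤ (Jset φ).ncard := by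
  classical
  set T : ℝ → Finset (Fin n) := fun ρ =>
    if h : ∃ x, x ∈ K φ ∧ x ≠ 0 ∧ f x = ρ • x then Zs φ h.choose else ∅ with hT
  have hwit : ∀ ρ ∈ coneSpectrum (K φ) f,
      ∃ x, x ∈ K φ ∧ x ≠ 0 ∧ f x = ρ • x := by
    rintro ρ ⟨hρ, x, hxK, hx0, hfx⟩
    exact ⟨x, hxK, hx0, hfx⟩
  have hinj : Set.InjOn T (coneSpectrum (K φ) f) := by
    intro ρ hρ σ hσ hTeq
    have hρw := hwit ρ hρ
    have hσw := hwit σ hσ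
    rw [hT] at hTeq
    simp only [dif_pos hρw, dif_pos hσw] at hTeq
    obtain ⟨hx1, hx2, hx3⟩ := hρw.choose_spec
    obtain ⟨hy1, hy2, hy3⟩ := hσw.choose_spec
    exact eigen_eq_of_Zs_eq φ hpt hmap hhom hord hx1 hy1 hx2 hy2 hρ.1 hσ.1
      hx3 hy3 hTeq
  have himfin : (T '' coneSpectrum (K φ) f).Finite := Set.toFinite _
  have hfinspec : (coneSpectrum (K φ) f).Finite :=
    Set.Finite.of_finite_image himfin hinj
  refine ⟨hfinspec, ?_⟩
  have hsub : T '' coneSpectrum (K φ) f ⊆ Jset φ := by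
    rintro _ ⟨ρ, hρ, rfl⟩
    have hρw := hwit ρ hρ
    rw [hT]
    simp only [dif_pos hρw]
    obtain ⟨hx1, hx2, _⟩ := hρw.choose_spec
    exact ⟨_, hx1, hx2, rfl⟩
  calc (coneSpectrum (K φ) f).ncard = (T '' coneSpectrum (K φ) f).ncard :=
        (Set.ncard_image_of_injOn hinj).symm
    _ ≤ (Jset φ).ncard := Set.ncard_le_ncard hsub (Set.toFinite _)

/-- the number of admissible zero-patterns equals the number of nonzero faces -/
lemma Jset_ncard (hpt : ∀ x : V, (∀ i, φ i x = 0) → x = 0)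
    (hfin : {F : Set V | IsFace (K φ) F}.Finite) :
    (Jset φ).ncard = {F : Set V | IsFace (K φ) F}.ncard - 1 := by
  classical
  set Φ : Finset (Fin n) → Set V := fun I => {z ∈ K φ | ∀ i ∈ I, φ i z = 0} with hΦ
  have hface : ∀ I ∈ Jset φ, ∀ x, x ∈ K φ → x ≠ 0 → Zs φ x = I → Φ I = faceOf φ x := by
    intro I hI x hxK hx0 hZx
    ext z
    simp only [hΦ, Set.mem_setOf_eq, mem_faceOf]
    constructor
    · rintro ⟨hz, hz2⟩
      exact ⟨hz, fun i hi => (mem_Zs φ).2 (hz2 i (hZx ▸ hi))⟩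
    · rintro ⟨hz, hz2⟩
      exact ⟨hz, fun i hi => (mem_Zs φ).1 (hz2 (hZx ▸ hi))⟩
  have hinj : Set.InjOn Φ (Jset φ) := by
    rintro I hI J hJ heq
    obtain ⟨x, hxK, hx0, hZx⟩ := hI
    obtain ⟨y, hyK, hy0, hZy⟩ := hJ
    have hxI : x ∈ Φ I := ⟨hxK, fun i hi => (mem_Zs φ).1 (hZx ▸ hi)⟩
    have hyJ : y ∈ Φ J := ⟨hyK, fun i hi => (mem_Zs φ).1 (hZy ▸ hi)⟩
    have hxJ : x ∈ Φ J := heq ▸ hxI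
    have hyI : y ∈ Φ I := heq ▸ hyJ
    apply Finset.Subset.antisymm
    · intro i hi
      rw [← hZy, mem_Zs]; exact hyI.2 i hi
    · intro i hi
      rw [← hZx, mem_Zs]; exact hxJ.2 i hi
  have himg : Φ '' Jset φ = {F : Set V | IsFace (K φ) F} \ {({0} : Set V)} := by
    ext F
    constructor
    · rintro ⟨I, hI, rfl⟩
      obtain ⟨x, hxK, hx0, hZx⟩ := hI
      rw [hface I ⟨x, hxK, hx0, hZx⟩ x hxK hx0 hZx]
      refine ⟨faceOf_isFace φ hxK, ?_⟩
      intro hcon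
      simp only [Set.mem_singleton_iff] at hcon
      exact hx0 (by
        have := self_mem_faceOf φ hxK
        rw [hcon] at this
        exact this)
    · rintro ⟨hF, hF0⟩
      simp only [Set.mem_setOf_eq] at hF
      obtain ⟨x, hxF, hFeq⟩ := face_eq_faceOf φ hF
      have hxK : x ∈ K φ := hF.2.2.1 hxF
      have hx0 : x ≠ 0 := by
        rintro rfl
        apply hF0
        simp only [Set.mem_singleton_iff]
        rw [hFeq]
        ext z
        simp only [mem_faceOf, Set.mem_singleton_iff]
        constructor
        · rintro ⟨hzK, hzZ⟩
          refine hpt z fun i => ?_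
          have : i ∈ Zs φ (0 : V) := (mem_Zs φ).2 (by simp)
          exact (mem_Zs φ).1 (hzZ this)
        · rintro rfl
          exact ⟨K_zero φ, fun i _ => (mem_Zs φ).2 (by simp)⟩
      refine ⟨Zs φ x, ⟨x, hxK, hx0, rfl⟩, ?_⟩
      rw [hface (Zs φ x) ⟨x, hxK, hx0, rfl⟩ x hxK hx0 rfl, hFeq]
  have h0mem : ({0} : Set V) ∈ {F : Set V | IsFace (K φ) F} :=
    face_singleton_zero φ hpt
  calc (Jset φ).ncard = (Φ '' Jset φ).ncard := (Set.ncard_image_of_injOn hinj).symm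
    _ = ({F : Set V | IsFace (K φ) F} \ {({0} : Set V)}).ncard := by rw [himg]
    _ = {F : Set V | IsFace (K φ) F}.ncard - 1 :=
        Set.ncard_diff_singleton_of_mem h0mem

end PartI


/-! ### Part (ii): the construction -/

section PartII

/-- choice of a relative interior point for each zero-pattern -/
def yv (I : Finset (Fin n)) : V :=
  if h : ∃ x, x ∈ K φ ∧ x ≠ 0 ∧ Zs φ x = I then h.choose else 0

lemma yv_memK (I : Finset (Fin n)) : yv φ I ∈ K φ := by
  rw [yv]
  split
  · next h => exact h.choose_spec.1
  · exact K_zero φ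

lemma yv_spec {I : Finset (Fin n)} (hI : I ∈ Jset φ) :
    yv φ I ∈ K φ ∧ yv φ I ≠ 0 ∧ Zs φ (yv φ I) = I := by
  rw [yv]
  split
  · next h => exact h.choose_spec
  · next h => exact absurd hI h

lemma yv_of_not_mem {I : Finset (Fin n)} (hI : I ∉ Jset φ) : yv φ I = 0 := by
  rw [yv]
  split
  · next h => exact absurd h hI
  · rfl

lemma Jset_ne_univ (hpt : ∀ x : V, (∀ i, φ i x = 0) → x = 0)
    {I : Finset (Fin n)} (hI : I ∈ Jset φ) : I ≠ Finset.univ := by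
  obtain ⟨hK, h0, hZ⟩ := yv_spec φ hI
  intro hcon
  apply h0
  apply hpt
  intro i
  exact (mem_Zs φ).1 (by rw [hZ, hcon]; exact Finset.mem_univ i)

lemma sdiff_nonempty_of_mem_Jset (hpt : ∀ x : V, (∀ i, φ i x = 0) → x = 0)
    {I : Finset (Fin n)} (hI : I ∈ Jset φ) : (Finset.univ \ I).Nonempty := by
  rw [Finset.sdiff_nonempty]
  intro hcon
  exact Jset_ne_univ φ hpt hI (Finset.eq_univ_iff_forall.2 fun i => hcon (Finset.mem_univ i))

/-- the gauge function associated to a zero-pattern -/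
def qf (I : Finset (Fin n)) (z : V) : ℝ :=
  if h : (Finset.univ \ I).Nonempty then
    (Finset.univ \ I).inf' h (fun i => φ i z / φ i (yv φ I)) else 0

lemma qf_nonneg {I : Finset (Fin n)} {z : V} (hz : z ∈ K φ) : 0 ≤ qf φ I z := by
  rw [qf]
  split
  · next h =>
    apply Finset.le_inf'
    intro i _
    exact div_nonneg (hz i) (yv_memK φ I i)
  · exact le_refl 0

lemma qf_mono {I : Finset (Fin n)} {z z' : V} (h : ∀ i, φ i z ≤ φ i z') :
    qf φ I z ≤ qf φ I z' := by
  rw [qf, qf]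
  split
  · next hne =>
    apply Finset.le_inf'
    intro i hi
    refine le_trans (Finset.inf'_le _ hi) ?_
    rcases eq_or_lt_of_le (yv_memK φ I i) with hc | hc
    · rw [← hc]; simp
    · exact (div_le_div_iff_of_pos_right hc).2 (h i)
  · exact le_refl 0

lemma qf_homog {I : Finset (Fin n)} {a : ℝ} (ha : 0 ≤ a) (z : V) :
    qf φ I (a • z) = a * qf φ I z := by
  rw [qf, qf]
  split
  · next hne =>
    have hterm : ∀ i, φ i (a • z) / φ i (yv φ I) = a * (φ i z / φ i (yv φ I)) := by
      intro i
      rw [map_smul, smul_eq_mul, mul_div_assoc]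
    apply le_antisymm
    · obtain ⟨i₀, hi₀, heq⟩ := Finset.exists_mem_eq_inf' hne (fun i => φ i z / φ i (yv φ I))
      calc (Finset.univ \ I).inf' hne (fun i => φ i (a • z) / φ i (yv φ I))
          ≤ φ i₀ (a • z) / φ i₀ (yv φ I) := Finset.inf'_le _ hi₀
        _ = a * (φ i₀ z / φ i₀ (yv φ I)) := hterm i₀
        _ = a * (Finset.univ \ I).inf' hne (fun i => φ i z / φ i (yv φ I)) := by rw [← heq]
    · apply Finset.le_inf'
      intro i hi
      rw [hterm i]
      exact mul_le_mul_of_nonneg_left (Finset.inf'_le _ hi) ha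
  · simp

lemma qf_eq_zero_of_not_subset {I : Finset (Fin n)} {z : V} (hz : z ∈ K φ)
    (h : ¬ Zs φ z ⊆ I) : qf φ I z = 0 := by
  obtain ⟨i, hiZ, hiI⟩ := Finset.not_subset.1 h
  have hi : i ∈ Finset.univ \ I := Finset.mem_sdiff.2 ⟨Finset.mem_univ i, hiI⟩
  refine le_antisymm ?_ (qf_nonneg φ hz)
  rw [qf, dif_pos ⟨i, hi⟩]
  refine le_trans (Finset.inf'_le _ hi) ?_
  rw [(mem_Zs φ).1 hiZ, zero_div]

lemma qf_pos (hpt : ∀ x : V, (∀ i, φ i x = 0) → x = 0)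
    {I : Finset (Fin n)} (hI : I ∈ Jset φ) {z : V} (hz : z ∈ K φ)
    (h : Zs φ z ⊆ I) : 0 < qf φ I z := by
  have hne := sdiff_nonempty_of_mem_Jset φ hpt hI
  rw [qf, dif_pos hne]
  rw [Finset.lt_inf'_iff]
  intro i hi
  have hiI : i ∉ I := (Finset.mem_sdiff.1 hi).2
  have h1 : 0 < φ i z := Zs_pos φ hz (fun hc => hiI (h hc))
  have h2 : 0 < φ i (yv φ I) := by
    refine Zs_pos φ (yv_memK φ I) ?_
    rw [(yv_spec φ hI).2.2]
    exact hiI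
  exact div_pos h1 h2


/-! #### the recursive construction -/

/-- fractional tag ensuring distinct eigenvalues -/
def tEnc (I : Finset (Fin n)) : ℝ := ((Encodable.encode I : ℝ) + 2)⁻¹

lemma tEnc_pos (I : Finset (Fin n)) : 0 < tEnc I := by
  rw [tEnc]; positivity

lemma tEnc_lt_one (I : Finset (Fin n)) : tEnc I < 1 := by
  rw [tEnc]
  rw [inv_lt_one_iff₀]
  right
  have : (0:ℝ) ≤ (Encodable.encode I : ℝ) := Nat.cast_nonneg _
  linarith

lemma tEnc_inj : Function.Injective (tEnc (n := n)) := by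
  intro I J h
  rw [tEnc, tEnc] at h
  have h2 := inv_injective h
  have h3 : (Encodable.encode I : ℝ) = (Encodable.encode J : ℝ) := by linarith
  exact Encodable.encode_injective (by exact_mod_cast h3)

/-- threshold -/
def Thr (I : Finset (Fin n)) (w : V) : ℝ :=
  if h : (Finset.univ \ I).Nonempty then
    (Finset.univ \ I).sup' h (fun i => φ i w / φ i (yv φ I)) else 0

/-- the eigenvalue assigned given the lower-order data `w` -/
def RhoF (I : Finset (Fin n)) (w : V) : ℝ :=
  ((⌈Thr φ I w⌉₊ + 1 : ℕ) : ℝ) + tEnc I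

lemma RhoF_pos (I : Finset (Fin n)) (w : V) : 0 < RhoF φ I w := by
  rw [RhoF]
  have := tEnc_pos I
  positivity

lemma Thr_le_RhoF (I : Finset (Fin n)) (w : V) : Thr φ I w ≤ RhoF φ I w := by
  rw [RhoF]
  have h1 : Thr φ I w ≤ (⌈Thr φ I w⌉₊ : ℝ) := Nat.le_ceil _
  have h2 := tEnc_pos I
  push_cast
  linarith

/-- the partial sums in the recursion -/
def Wsum (I : Finset (Fin n)) (vp : Finset (Fin n) → V) : V :=
  ∑ J ∈ Finset.univ.filter (fun J => I ⊂ J), qf φ J (yv φ I) • vp J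

/-- one step of the recursion -/
def stepv (I : Finset (Fin n)) (vp : Finset (Fin n) → V) : V :=
  if I ∈ Jset φ then
    (qf φ I (yv φ I))⁻¹ • (RhoF φ I (Wsum φ I vp) • yv φ I - Wsum φ I vp)
  else 0

lemma Wsum_congr {I : Finset (Fin n)} {vp vp' : Finset (Fin n) → V}
    (h : ∀ J, I ⊂ J → vp J = vp' J) : Wsum φ I vp = Wsum φ I vp' := by
  rw [Wsum, Wsum]
  apply Finset.sum_congr rfl
  intro J hJ
  rw [h J (Finset.mem_filter.1 hJ).2]

lemma stepv_congr {I : Finset (Fin n)} {vp vp' : Finset (Fin n) → V}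
    (h : ∀ J, I ⊂ J → vp J = vp' J) : stepv φ I vp = stepv φ I vp' := by
  rw [stepv, stepv, Wsum_congr φ h]

/-- fuel-based recursion -/
def vAux : ℕ → Finset (Fin n) → V
  | 0, _ => 0
  | (d+1), I => stepv φ I (vAux d)

/-- the vectors of the construction -/
def vF (I : Finset (Fin n)) : V := vAux φ (n - I.card + 1) I

lemma card_lt_of_ssubset {I J : Finset (Fin n)} (h : I ⊂ J) :
    n - J.card < n - I.card := by
  have h1 : I.card < J.card := Finset.card_lt_card h
  have h2 : J.card ≤ n := by
    have := Finset.card_le_card (Finset.subset_univ J)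
    simpa using this
  omega

lemma vAux_stab : ∀ d : ℕ, ∀ I : Finset (Fin n), n - I.card ≤ d →
    vAux φ (d+1) I = vF φ I := by
  intro d
  induction d using Nat.strong_induction_on with
  | _ d ih =>
    intro I hI
    rw [vF]
    show stepv φ I (vAux φ d) = vAux φ (n - I.card + 1) I
    show stepv φ I (vAux φ d) = stepv φ I (vAux φ (n - I.card))
    apply stepv_congr
    intro J hJ
    have hlt := card_lt_of_ssubset (n := n) hJ
    have hd1 : 1 ≤ d := by omega
    have hc1 : 1 ≤ n - I.card := by omega
    obtain ⟨e, rfl⟩ : ∃ e, d = e + 1 := ⟨d - 1, by omega⟩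
    obtain ⟨c, hc⟩ : ∃ c, n - I.card = c + 1 := ⟨n - I.card - 1, by omega⟩
    rw [hc]
    rw [ih e (by omega) J (by omega), ih c (by omega) J (by omega)]

lemma vF_eq (I : Finset (Fin n)) : vF φ I = stepv φ I (vF φ) := by
  rw [vF]
  show stepv φ I (vAux φ (n - I.card)) = stepv φ I (vF φ)
  apply stepv_congr
  intro J hJ
  have hlt := card_lt_of_ssubset (n := n) hJ
  obtain ⟨c, hc⟩ : ∃ c, n - I.card = c + 1 := ⟨n - I.card - 1, by omega⟩
  rw [hc]
  exact vAux_stab φ c J (by omega)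

/-- the final data -/
def WF (I : Finset (Fin n)) : V := Wsum φ I (vF φ)

def rhoF (I : Finset (Fin n)) : ℝ := RhoF φ I (WF φ I)

lemma vF_eq' {I : Finset (Fin n)} (hI : I ∈ Jset φ) :
    vF φ I = (qf φ I (yv φ I))⁻¹ • (rhoF φ I • yv φ I - WF φ I) := by
  rw [vF_eq, stepv, if_pos hI, rhoF, WF]

lemma vF_eq_zero {I : Finset (Fin n)} (hI : I ∉ Jset φ) : vF φ I = 0 := by
  rw [vF_eq, stepv, if_neg hI]

lemma K_sum {α : Type*} (s : Finset α) (h : α → V) (hh : ∀ j ∈ s, h j ∈ K φ) :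
    (∑ j ∈ s, h j) ∈ K φ := by
  classical
  induction s using Finset.induction_on with
  | empty => simpa using K_zero φ
  | insert a s' hx ih =>
      rw [Finset.sum_insert hx]
      exact K_add φ (hh a (Finset.mem_insert_self a s'))
        (ih fun j hj => hh j (Finset.mem_insert_of_mem hj))

lemma rhoF_pos (I : Finset (Fin n)) : 0 < rhoF φ I := RhoF_pos φ I _

/-- main structural induction: the vectors lie in the cone and on the right face -/
lemma vF_mem (hpt : ∀ x : V, (∀ i, φ i x = 0) → x = 0) :
    ∀ I : Finset (Fin n), vF φ I ∈ K φ ∧ ∀ i ∈ I, φ i (vF φ I) = 0 := by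
  suffices H : ∀ k : ℕ, ∀ I : Finset (Fin n), n - I.card ≤ k →
      vF φ I ∈ K φ ∧ ∀ i ∈ I, φ i (vF φ I) = 0 by
    intro I; exact H (n - I.card) I le_rfl
  intro k
  induction k using Nat.strong_induction_on with
  | _ k ih =>
    intro I hIk
    by_cases hI : I ∈ Jset φ
    swap
    · rw [vF_eq_zero φ hI]
      exact ⟨K_zero φ, fun i _ => by simp⟩
    obtain ⟨hyK, hy0, hyZ⟩ := yv_spec φ hI
    -- properties of WF
    have hWmem : WF φ I ∈ K φ ∧ ∀ i ∈ I, φ i (WF φ I) = 0 := by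
      constructor
      · rw [WF, Wsum]
        apply K_sum
        intro J hJ
        have hJ' := (Finset.mem_filter.1 hJ).2
        have hlt := card_lt_of_ssubset (n := n) hJ'
        have hvJ := (ih (n - J.card) (by omega) J le_rfl).1
        exact K_smul φ (qf_nonneg φ hyK) hvJ
      · intro i hi
        rw [WF, Wsum, map_sum]
        apply Finset.sum_eq_zero
        intro J hJ
        have hJ' := (Finset.mem_filter.1 hJ).2
        have hlt := card_lt_of_ssubset (n := n) hJ'
        have hvJ := (ih (n - J.card) (by omega) J le_rfl).2
        rw [map_smul, smul_eq_mul, hvJ i (hJ'.subset hi), mul_zero]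
    -- the unnormalized vector
    have hkey : (rhoF φ I • yv φ I - WF φ I) ∈ K φ ∧
        ∀ i ∈ I, φ i (rhoF φ I • yv φ I - WF φ I) = 0 := by
      constructor
      · intro i
        by_cases hi : i ∈ I
        · rw [map_sub, map_smul, smul_eq_mul]
          have h1 : φ i (yv φ I) = 0 := (mem_Zs φ).1 (by rw [hyZ]; exact hi)
          rw [h1, hWmem.2 i hi, mul_zero, sub_zero]
        · have hipos : 0 < φ i (yv φ I) := by
            refine Zs_pos φ hyK ?_
            rw [hyZ]; exact hi
          have hthr : φ i (WF φ I) / φ i (yv φ I) ≤ rhoF φ I := by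
            refine le_trans ?_ (Thr_le_RhoF φ I (WF φ I))
            rw [Thr, dif_pos (sdiff_nonempty_of_mem_Jset φ hpt hI)]
            exact Finset.le_sup' (fun i => φ i (WF φ I) / φ i (yv φ I))
              (Finset.mem_sdiff.2 ⟨Finset.mem_univ i, hi⟩)
          rw [map_sub, map_smul, smul_eq_mul, sub_nonneg]
          rw [div_le_iff₀ hipos] at hthr
          linarith
      · intro i hi
        rw [map_sub, map_smul, smul_eq_mul]
        have h1 : φ i (yv φ I) = 0 := (mem_Zs φ).1 (by rw [hyZ]; exact hi)
        rw [h1, hWmem.2 i hi, mul_zero, sub_zero]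
    rw [vF_eq' φ hI]
    have hqinv : (0:ℝ) ≤ (qf φ I (yv φ I))⁻¹ :=
      inv_nonneg.2 (qf_nonneg φ hyK)
    refine ⟨K_smul φ hqinv hkey.1, fun i hi => ?_⟩
    rw [map_smul, smul_eq_mul, hkey.2 i hi, mul_zero]

lemma vF_memK (hpt : ∀ x : V, (∀ i, φ i x = 0) → x = 0)
    (I : Finset (Fin n)) : vF φ I ∈ K φ := (vF_mem φ hpt I).1

/-- the map of part (ii) -/
def gF (z : V) : V :=
  ∑ J ∈ (Finset.univ : Finset (Finset (Fin n))), qf φ J z • vF φ J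


lemma gF_mapsTo (hpt : ∀ x : V, (∀ i, φ i x = 0) → x = 0) :
    Set.MapsTo (gF φ) (K φ) (K φ) := by
  intro z hz
  rw [gF]
  apply K_sum
  intro J _
  exact K_smul φ (qf_nonneg φ hz) (vF_memK φ hpt J)

lemma gF_homog : IsHomog (K φ) (gF φ) := by
  intro a ha z _
  rw [gF, gF, Finset.smul_sum]
  apply Finset.sum_congr rfl
  intro J _
  rw [qf_homog φ ha, mul_smul]

lemma gF_ordPres (hpt : ∀ x : V, (∀ i, φ i x = 0) → x = 0) :
    IsOrdPres (K φ) (gF φ) := by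
  intro x hx y hy hxy
  unfold coneLE at hxy ⊢
  rw [gF, gF, ← Finset.sum_sub_distrib]
  apply K_sum
  intro J _
  rw [← sub_smul]
  refine K_smul φ ?_ (vF_memK φ hpt J)
  rw [sub_nonneg]
  apply qf_mono
  intro i
  have := hxy i
  rw [map_sub] at this
  linarith

lemma continuous_inf' {α : Type*} (s : Finset α) (hs : s.Nonempty) (f : α → V → ℝ)
    (hf : ∀ i, Continuous (f i)) : Continuous (fun z => s.inf' hs (fun i => f i z)) := by
  classical
  induction hs using Finset.Nonempty.cons_induction with
  | singleton a => simpa using hf a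
  | cons a s' ha hs' ih =>
    have : (fun z => (Finset.cons a s' ha).inf' (Finset.cons_nonempty ha) (fun i => f i z))
        = fun z => min (f a z) (s'.inf' hs' (fun i => f i z)) := by
      funext z
      rw [Finset.inf'_cons]
    rw [this]
    exact (hf a).min ih

lemma qf_continuous (J : Finset (Fin n)) : Continuous (qf φ J) := by
  unfold qf
  split
  · next h =>
    exact continuous_inf' _ h _ fun i =>
      ((φ i).continuous_of_finiteDimensional).div_const _
  · exact continuous_const

lemma gF_continuous : Continuous (gF φ) := by
  unfold gF
  apply continuous_finset_sum
  intro J _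
  exact (qf_continuous φ J).smul continuous_const

/-- the eigenvalue equation -/
lemma gF_eigen (hpt : ∀ x : V, (∀ i, φ i x = 0) → x = 0)
    {I : Finset (Fin n)} (hI : I ∈ Jset φ) :
    gF φ (yv φ I) = rhoF φ I • yv φ I := by
  classical
  obtain ⟨hyK, hy0, hyZ⟩ := yv_spec φ hI
  have hsplit : gF φ (yv φ I)
      = ∑ J ∈ Finset.univ.filter (fun J => I ⊆ J), qf φ J (yv φ I) • vF φ J := by
    rw [gF]
    symm
    apply Finset.sum_subset (Finset.filter_subset _ _)
    intro J _ hJ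
    have hnsub : ¬ Zs φ (yv φ I) ⊆ J := by
      rw [hyZ]
      intro hcon
      exact hJ (Finset.mem_filter.2 ⟨Finset.mem_univ J, hcon⟩)
    rw [qf_eq_zero_of_not_subset φ hyK hnsub, zero_smul]
  have hins : Finset.univ.filter (fun J => I ⊆ J)
      = insert I (Finset.univ.filter (fun J => I ⊂ J)) := by
    ext J
    simp only [Finset.mem_filter, Finset.mem_univ, true_and, Finset.mem_insert]
    constructor
    · intro h
      rcases eq_or_ne J I with h' | h'
      · exact Or.inl h'
      · exact Or.inr (Finset.ssubset_iff_subset_ne.2 ⟨h, Ne.symm h'⟩)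
    · rintro (rfl | h)
      · exact subset_rfl
      · exact h.subset
  have hnotmem : I ∉ Finset.univ.filter (fun J => I ⊂ J) := by
    simp only [Finset.mem_filter, Finset.mem_univ, true_and]
    exact fun h => (lt_irrefl I h)
  rw [hsplit, hins, Finset.sum_insert hnotmem]
  have hsum : ∑ J ∈ Finset.univ.filter (fun J => I ⊂ J), qf φ J (yv φ I) • vF φ J
      = WF φ I := by rw [WF, Wsum]
  rw [hsum, vF_eq' φ hI]
  have hq : qf φ I (yv φ I) ≠ 0 :=
    ne_of_gt (qf_pos φ hpt hI hyK (by rw [hyZ]))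
  rw [smul_smul, mul_inv_cancel₀ hq, one_smul, sub_add_cancel]

/-- distinctness of the eigenvalues -/
lemma rhoF_inj : Function.Injective (rhoF φ) := by
  intro I J h
  rw [rhoF, rhoF, RhoF, RhoF] at h
  set a := ⌈Thr φ I (WF φ I)⌉₊ + 1 with ha
  set b := ⌈Thr φ J (WF φ J)⌉₊ + 1 with hb
  have hI1 := tEnc_pos I
  have hI2 := tEnc_lt_one I
  have hJ1 := tEnc_pos J
  have hJ2 := tEnc_lt_one J
  have hab : a = b := by
    rcases Nat.lt_trichotomy a b with hlt | heq | hlt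
    · exfalso
      have : (a:ℝ) + 1 ≤ (b:ℝ) := by exact_mod_cast Nat.succ_le_of_lt hlt
      linarith
    · exact heq
    · exfalso
      have : (b:ℝ) + 1 ≤ (a:ℝ) := by exact_mod_cast Nat.succ_le_of_lt hlt
      linarith
  have : tEnc I = tEnc J := by
    rw [hab] at h
    have : (b:ℝ) + tEnc I = (b:ℝ) + tEnc J := h
    linarith
  exact tEnc_inj this

/-- part (ii) packaged -/
lemma partII (hpt : ∀ x : V, (∀ i, φ i x = 0) → x = 0) :
    ∃ g : V → V, Set.MapsTo g (K φ) (K φ) ∧ ContinuousOn g (K φ) ∧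
      IsHomog (K φ) g ∧ IsOrdPres (K φ) g ∧
      (coneSpectrum (K φ) g).ncard = (Jset φ).ncard := by
  refine ⟨gF φ, gF_mapsTo φ hpt, (gF_continuous φ).continuousOn, gF_homog φ,
    gF_ordPres φ hpt, ?_⟩
  have hbound := partI φ hpt (gF_mapsTo φ hpt) (gF_homog φ) (gF_ordPres φ hpt)
  have hsub : rhoF φ '' Jset φ ⊆ coneSpectrum (K φ) (gF φ) := by
    rintro _ ⟨I, hI, rfl⟩
    obtain ⟨hyK, hy0, _⟩ := yv_spec φ hI
    exact ⟨(rhoF_pos φ I).le, yv φ I, hyK, hy0, gF_eigen φ hpt hI⟩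
  have h1 : (Jset φ).ncard ≤ (coneSpectrum (K φ) (gF φ)).ncard := by
    calc (Jset φ).ncard = (rhoF φ '' Jset φ).ncard :=
          (Set.ncard_image_of_injective _ (rhoF_inj φ)).symm
      _ ≤ (coneSpectrum (K φ) (gF φ)).ncard :=
          Set.ncard_le_ncard hsub hbound.1
  exact le_antisymm hbound.2 h1

end PartII

end PolyAux

/-- Let `C` be a polyhedral cone with non-empty interior in a finite dimensional real
vector space, with exactly `m` faces. Then (i) the cone spectrum of every order-preserving
homogeneous map `f : C → C` contains at most `m - 1` elements; and (ii) there exists a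
continuous order-preserving homogeneous map `g : C → C` whose cone spectrum contains
exactly `m - 1` distinct elements. -/
theorem polyhedral_coneSpectrum_card
    (C : Set V) (hC : IsClosedCone C) (hpoly : IsPolyhedral C)
    (hint : (interior C).Nonempty)
    (m : ℕ) (hfin : {F : Set V | IsFace C F}.Finite)
    (hm : {F : Set V | IsFace C F}.ncard = m) :
    (∀ f : V → V, Set.MapsTo f C C → IsHomog C f → IsOrdPres C f →
        (coneSpectrum C f).Finite ∧ (coneSpectrum C f).ncard ≤ m - 1) ∧
      ∃ g : V → V, Set.MapsTo g C C ∧ ContinuousOn g C ∧ IsHomog C g ∧ IsOrdPres C g ∧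
        (coneSpectrum C g).ncard = m - 1 := by
  obtain ⟨n, φ, hCeq⟩ := hpoly
  subst hCeq
  have hpt : ∀ x : V, (∀ i, φ i x = 0) → x = 0 := by
    intro x hx
    refine hC.2.2.2 x (fun i => le_of_eq (hx i).symm) (fun i => ?_)
    show (0:ℝ) ≤ φ i (-x)
    rw [map_neg, hx i, neg_zero]
  have hm' : {F : Set V | IsFace (PolyAux.K φ) F}.ncard = m := hm
  have hfin' : {F : Set V | IsFace (PolyAux.K φ) F}.Finite := hfin
  constructor
  · intro f hmap hhom hord
    have h := PolyAux.partI φ hpt hmap hhom hord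
    refine ⟨h.1, ?_⟩
    calc (coneSpectrum _ f).ncard ≤ (PolyAux.Jset φ).ncard := h.2
      _ = {F : Set V | IsFace (PolyAux.K φ) F}.ncard - 1 :=
          PolyAux.Jset_ncard φ hpt hfin'
      _ = m - 1 := by rw [hm']
  · obtain ⟨g, h1, h2, h3, h4, h5⟩ := PolyAux.partII φ hpt
    refine ⟨g, h1, h2, h3, h4, ?_⟩
    show (coneSpectrum (PolyAux.K φ) g).ncard = m - 1
    rw [h5, PolyAux.Jset_ncard φ hpt hfin', hm']
end
end

section
/- Let C be a closed non-polyhedral cone with non-empty interior in a finite dimensional real vector space V. Then there exists a continuous order-preserving homogeneous map f : C → C with infinitely many distinct eigenvalues, i.e., the cone spectrum σ_C(f) is infinite. -/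
open Filter Topology Set

set_option linter.unusedSectionVars false
set_option maxHeartbeats 1000000

noncomputable section

variable {V : Type*} [NormedAddCommGroup V] [NormedSpace ℝ V] [FiniteDimensional ℝ V]

section Euclid

open scoped RealInnerProductSpace

variable {E : Type*} [NormedAddCommGroup E] [InnerProductSpace ℝ E] [FiniteDimensional ℝ E]

/-- farthest points of a compact set are exposed -/
lemma farthest_mem_exposedPoints {B : Set E} (hBc : IsCompact B) (hne : B.Nonempty) (z : E) :
    ∃ b ∈ B.exposedPoints ℝ, ∀ y ∈ B, ‖y - z‖ ≤ ‖b - z‖ := by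
  obtain ⟨b, hbB, hbmax⟩ := hBc.exists_isMaxOn hne
    ((continuous_id.sub continuous_const).norm.continuousOn)
  refine ⟨b, ?_, fun y hy => hbmax hy⟩
  rw [exposed_point_def]
  refine ⟨hbB, innerSL ℝ (b - z), fun y hy => ?_⟩
  have hyb : ‖y - z‖ ≤ ‖b - z‖ := hbmax hy
  have key : ⟪b - z, y - z⟫ ≤ ‖b - z‖ ^ 2 := by
    calc ⟪b - z, y - z⟫ ≤ ‖b - z‖ * ‖y - z‖ := real_inner_le_norm _ _
    _ ≤ ‖b - z‖ * ‖b - z‖ := by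
        exact mul_le_mul_of_nonneg_left hyb (norm_nonneg _)
    _ = ‖b - z‖ ^ 2 := by ring
  constructor
  · -- innerSL (b-z) y ≤ innerSL (b-z) b
    simp only [innerSL_apply_apply]
    have h1 : ⟪b - z, y⟫ = ⟪b - z, y - z⟫ + ⟪b - z, z⟫ := by
      rw [← inner_add_right, sub_add_cancel]
    have h2 : ⟪b - z, b⟫ = ⟪b - z, b - z⟫ + ⟪b - z, z⟫ := by
      rw [← inner_add_right, sub_add_cancel]
    rw [h1, h2, real_inner_self_eq_norm_sq]
    linarith
  · intro hle
    simp only [innerSL_apply_apply] at hle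
    -- then ⟪b-z, y-z⟫ ≥ ‖b-z‖^2
    have h1 : ⟪b - z, y⟫ = ⟪b - z, y - z⟫ + ⟪b - z, z⟫ := by
      rw [← inner_add_right, sub_add_cancel]
    have h2 : ⟪b - z, b⟫ = ⟪b - z, b - z⟫ + ⟪b - z, z⟫ := by
      rw [← inner_add_right, sub_add_cancel]
    rw [h2, h1, real_inner_self_eq_norm_sq] at hle
    have hge : ‖b - z‖ ^ 2 ≤ ⟪b - z, y - z⟫ := by linarith
    have hzero : ‖(y - z) - (b - z)‖ ^ 2 ≤ 0 := by
      rw [norm_sub_sq_real]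
      have := real_inner_comm (y - z) (b - z)
      have hnorm : ‖y - z‖ ^ 2 ≤ ‖b - z‖ ^ 2 := by
        have := norm_nonneg (y - z)
        nlinarith
      nlinarith [real_inner_comm (y-z) (b-z)]
    have hz : (y - z) - (b - z) = 0 := by
      have := sq_nonneg ‖(y - z) - (b - z)‖
      have h0 : ‖(y - z) - (b - z)‖ ^ 2 = 0 := le_antisymm hzero this
      have := pow_eq_zero_iff (n := 2) (by norm_num) |>.mp h0
      exact norm_eq_zero.mp this
    exact sub_left_injective (sub_eq_zero.mp hz)

/-- Straszewicz-type: compact set with finitely many exposed points is contained in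
their convex hull -/
lemma subset_convexHull_exposedPoints {B : Set E} (hBc : IsCompact B) (hconv : Convex ℝ B)
    (hfin : (B.exposedPoints ℝ).Finite) : B ⊆ convexHull ℝ (B.exposedPoints ℝ) := by
  intro x hxB
  by_contra hxS
  set S := convexHull ℝ (B.exposedPoints ℝ) with hS
  have hSclosed : IsClosed S := (hfin.isCompact_convexHull ℝ).isClosed
  have hSconv : Convex ℝ S := convex_convexHull _ _
  obtain ⟨l, c, hlt, hc⟩ := geometric_hahn_banach_closed_point hSconv hSclosed hxS
  set u : E := (InnerProductSpace.toDual ℝ E).symm l with hu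
  have hul : ∀ w : E, ⟪u, w⟫ = l w := fun w => InnerProductSpace.toDual_symm_apply
  -- bound on B
  obtain ⟨R, hR0, hRB⟩ : ∃ R > 0, ∀ y ∈ B, ‖y‖ ≤ R := by
    obtain ⟨R, hR⟩ := hBc.isBounded.subset_closedBall 0
    exact ⟨max R 1, by positivity, fun y hy => by
      have := hR hy; rw [Metric.mem_closedBall, dist_zero_right] at this
      exact this.trans (le_max_left _ _)⟩
  set g : ℝ := l x - c with hg
  have hgpos : 0 < g := by simp [hg]; linarith
  set lam : ℝ := (2*R)^2/(2*g) + 1 with hlam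
  have hlampos : 0 < lam := by positivity
  obtain ⟨b, hbexp, hbmax⟩ := farthest_mem_exposedPoints hBc ⟨x, hxB⟩ (x - lam • u)
  have hbB : b ∈ B := exposedPoints_subset hbexp
  -- key inequality
  have h1 : ‖x - (x - lam • u)‖ ≤ ‖b - (x - lam • u)‖ := hbmax x hxB
  have h2 : ‖lam • u‖ ≤ ‖(b - x) + lam • u‖ := by
    have e1 : x - (x - lam • u) = lam • u := by abel
    have e2 : b - (x - lam • u) = (b - x) + lam • u := by abel
    rwa [e1, e2] at h1
  have h3 : 0 ≤ ‖b - x‖^2 + 2 * (lam * ⟪b - x, u⟫) := by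
    have := norm_add_sq_real (b - x) (lam • u)
    have hsq : ‖lam • u‖^2 ≤ ‖(b - x) + lam • u‖^2 := by
      have := norm_nonneg (lam • u)
      nlinarith
    rw [this] at hsq
    have hinner : ⟪b - x, lam • u⟫ = lam * ⟪b - x, u⟫ := real_inner_smul_right _ _ _
    nlinarith [hinner]
  have hbx : ‖b - x‖ ≤ 2 * R := by
    calc ‖b - x‖ ≤ ‖b‖ + ‖x‖ := norm_sub_le _ _
    _ ≤ R + R := add_le_add (hRB b hbB) (hRB x hxB)
    _ = 2 * R := by ring
  have h4 : ⟪u, x⟫ - ⟪u, b⟫ ≤ (2*R)^2/(2*lam) := by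
    have hinner : ⟪b - x, u⟫ = ⟪u, b⟫ - ⟪u, x⟫ := by
      rw [real_inner_comm, inner_sub_right]
    have hb2 : ‖b - x‖^2 ≤ (2*R)^2 := by nlinarith [norm_nonneg (b - x)]
    have h5 : -((2*R)^2) ≤ 2 * lam * (⟪u, b⟫ - ⟪u, x⟫) := by nlinarith [h3, hinner]
    rw [le_div_iff₀ (by linarith : (0:ℝ) < 2*lam)]
    nlinarith [h5]
  have hsmall : (2*R)^2/(2*lam) < g := by
    rw [div_lt_iff₀ (by linarith : (0:ℝ) < 2*lam)]
    have expand : g * (2*lam) = (2*R)^2 + 2*g := by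
      rw [hlam]; field_simp
    linarith
  have hfinal : c < ⟪u, b⟫ := by
    have := hul x
    have := hul b
    have : ⟪u, x⟫ = l x := hul x
    linarith [h4, hsmall, hul x]
  have : l b < c := hlt b (subset_convexHull ℝ _ hbexp)
  rw [← hul b] at this
  linarith

def dualSet (D : Set E) : Set E := {y | ∀ x ∈ D, 0 ≤ ⟪y, x⟫}

def dbase (D : Set E) (u : E) : Set E := {y ∈ dualSet D | ⟪y, u⟫ = 1}

lemma dual_norm_le {D : Set E} {u : E} {r : ℝ} (hr : 0 < r) (hball : Metric.ball u r ⊆ D) :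
    ∀ y ∈ dualSet D, (r/2) * ‖y‖ ≤ ⟪y, u⟫ := by
  intro y hy
  rcases eq_or_ne y 0 with rfl | hy0
  · simp
  · have hny : 0 < ‖y‖ := norm_pos_iff.mpr hy0
    set z : E := u - ((r/2) * ‖y‖⁻¹) • y with hz
    have hzD : z ∈ D := by
      apply hball
      rw [Metric.mem_ball, dist_eq_norm]
      have : z - u = -(((r/2) * ‖y‖⁻¹) • y) := by rw [hz]; abel
      rw [this, norm_neg, norm_smul]
      have : ‖(r/2) * ‖y‖⁻¹‖ = (r/2) * ‖y‖⁻¹ := by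
        rw [Real.norm_eq_abs, abs_of_pos (by positivity)]
      rw [this]
      rw [mul_assoc, inv_mul_cancel₀ (ne_of_gt hny)]
      simpa using by linarith
    have h0 := hy z hzD
    rw [hz, inner_sub_right, real_inner_smul_right, real_inner_self_eq_norm_sq] at h0
    have : ((r/2) * ‖y‖⁻¹) * ‖y‖^2 = (r/2) * ‖y‖ := by
      field_simp
    rw [this] at h0
    linarith

lemma dbase_isCompact {D : Set E} {u : E} {r : ℝ} (hr : 0 < r) (hball : Metric.ball u r ⊆ D) :
    IsCompact (dbase D u) := by
  have hclosed : IsClosed (dbase D u) := by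
    have h1 : IsClosed (dualSet D) := by
      have : dualSet D = ⋂ x ∈ D, {y : E | 0 ≤ ⟪y, x⟫} := by
        ext y; simp [dualSet]
      rw [this]
      exact isClosed_biInter fun x _ =>
        isClosed_le continuous_const ((continuous_id).inner continuous_const)
    have h2 : IsClosed {y : E | ⟪y, u⟫ = (1:ℝ)} :=
      isClosed_eq ((continuous_id).inner continuous_const) continuous_const
    exact h1.inter h2
  have hbdd : dbase D u ⊆ Metric.closedBall 0 (2/r) := by
    intro y hy
    obtain ⟨hyd, hyu⟩ := hy
    have := dual_norm_le hr hball y hyd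
    rw [hyu] at this
    rw [Metric.mem_closedBall, dist_zero_right]
    rw [le_div_iff₀ hr]
    nlinarith
  exact (isCompact_closedBall (0:E) (2/r)).of_isClosed_subset hclosed hbdd

lemma dbase_scale {D : Set E} {u : E} {r : ℝ} (hr : 0 < r) (hball : Metric.ball u r ⊆ D)
    {y : E} (hy : y ∈ dualSet D) (hy0 : y ≠ 0) :
    0 < ⟪y, u⟫ ∧ (⟪y, u⟫)⁻¹ • y ∈ dbase D u := by
  have hny : 0 < ‖y‖ := norm_pos_iff.mpr hy0
  have hpos : 0 < ⟪y, u⟫ := lt_of_lt_of_le (by positivity) (dual_norm_le hr hball y hy)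
  refine ⟨hpos, ⟨?_, ?_⟩⟩
  · intro x hx
    rw [real_inner_smul_left]
    exact mul_nonneg (by positivity) (hy x hx)
  · rw [real_inner_smul_left, inv_mul_cancel₀ (ne_of_gt hpos)]

lemma cone_zero_mem {D : Set E} (hD : IsClosedCone D) (hne : D.Nonempty) : (0 : E) ∈ D := by
  obtain ⟨x, hx⟩ := hne
  simpa using hD.2.2.1 0 le_rfl x hx

lemma cone_add_mem {D : Set E} (hD : IsClosedCone D) {a b : E} (ha : a ∈ D) (hb : b ∈ D) :
    a + b ∈ D := by
  have h := hD.2.1 ha hb (by norm_num : (0:ℝ) ≤ 1/2) (by norm_num : (0:ℝ) ≤ 1/2) (by norm_num)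
  have := hD.2.2.1 2 (by norm_num) _ h
  simpa [smul_smul, smul_add] using this

lemma cone_sum_mem {D : Set E} (hD : IsClosedCone D) (h0 : (0:E) ∈ D) {ι : Type*}
    (s : Finset ι) (g : ι → E) (hg : ∀ i ∈ s, g i ∈ D) : ∑ i ∈ s, g i ∈ D := by
  classical
  induction s using Finset.induction with
  | empty => simpa using h0
  | insert a s hx ih =>
    rw [Finset.sum_insert hx]
    exact cone_add_mem hD (hg _ (Finset.mem_insert_self _ _))
      (ih fun i hi => hg i (Finset.mem_insert_of_mem hi))

lemma cone_tsum_mem {D : Set E} (hD : IsClosedCone D) (h0 : (0:E) ∈ D) {g : ℕ → E}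
    (hsum : Summable g) (hg : ∀ i, g i ∈ D) : ∑' i, g i ∈ D := by
  refine hD.1.mem_of_tendsto hsum.hasSum (Filter.Eventually.of_forall fun s => ?_)
  exact cone_sum_mem hD h0 s g fun i _ => hg i

/-- biduality via Hahn-Banach -/
lemma mem_of_forall_dual {D : Set E} (hD : IsClosedCone D) (h0 : (0:E) ∈ D) {x : E}
    (hx : ∀ y ∈ dualSet D, 0 ≤ ⟪y, x⟫) : x ∈ D := by
  by_contra hxD
  obtain ⟨l, c, hlt, hc⟩ := geometric_hahn_banach_closed_point hD.2.1 hD.1 hxD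
  have hc0 : 0 < c := by simpa using hlt 0 h0
  have hl : ∀ a ∈ D, l a ≤ 0 := by
    intro a ha
    by_contra hla
    push_neg at hla
    have ht : (0:ℝ) ≤ (c+1)/(l a) := le_of_lt (div_pos (by linarith) hla)
    have := hlt _ (hD.2.2.1 _ ht a ha)
    rw [map_smul] at this
    simp only [smul_eq_mul] at this
    rw [div_mul_cancel₀ _ (ne_of_gt hla)] at this
    linarith
  set y := (InnerProductSpace.toDual ℝ E).symm (-l) with hy
  have hyd : y ∈ dualSet D := by
    intro a ha
    have : ⟪y, a⟫ = (-l) a := InnerProductSpace.toDual_symm_apply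
    rw [this]
    simpa using hl a ha
  have := hx y hyd
  have hyx : ⟪y, x⟫ = (-l) x := InnerProductSpace.toDual_symm_apply
  rw [hyx] at this
  simp only [ContinuousLinearMap.neg_apply] at this
  linarith


lemma polyhedral_of_finite_exposed {D : Set E} (hD : IsClosedCone D) (h0 : (0:E) ∈ D)
    {u : E} {r : ℝ} (hr : 0 < r) (hball : Metric.ball u r ⊆ D)
    (hfin : ((dbase D u).exposedPoints ℝ).Finite) : IsPolyhedral D := by
  have hBc : IsCompact (dbase D u) := dbase_isCompact hr hball
  have hBconv : Convex ℝ (dbase D u) := by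
    intro y hy z hz a b ha hb hab
    refine ⟨fun x hx => ?_, ?_⟩
    · rw [inner_add_left, real_inner_smul_left, real_inner_smul_left]
      have := hy.1 x hx; have := hz.1 x hx
      positivity
    · rw [inner_add_left, real_inner_smul_left, real_inner_smul_left, hy.2, hz.2]
      simpa using hab
  have hsub := subset_convexHull_exposedPoints hBc hBconv hfin
  obtain ⟨m, g, hg⟩ := hfin.fin_embedding
  refine ⟨m, fun i => (innerSL ℝ (g i)).toLinearMap, ?_⟩
  ext x
  simp only [Set.mem_setOf_eq, ContinuousLinearMap.coe_coe, innerSL_apply_apply]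
  constructor
  · intro hx i
    have : (g i : E) ∈ dualSet D := by
      have : (g i : E) ∈ (dbase D u).exposedPoints ℝ := by
        rw [← hg]; exact ⟨i, rfl⟩
      exact (exposedPoints_subset this).1
    exact this x hx
  · intro hx
    apply mem_of_forall_dual hD h0
    intro y hy
    rcases eq_or_ne y 0 with rfl | hy0
    · simp
    · obtain ⟨hpos, hmem⟩ := dbase_scale hr hball hy hy0
      have hmem' : (⟪y, u⟫)⁻¹ • y ∈ convexHull ℝ ((dbase D u).exposedPoints ℝ) := hsub hmem
      have hT : convexHull ℝ ((dbase D u).exposedPoints ℝ) ⊆ {w : E | 0 ≤ ⟪w, x⟫} := by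
        apply convexHull_min
        · intro w hw
          rw [← hg] at hw
          obtain ⟨i, rfl⟩ := hw
          exact hx i
        · intro w₁ hw₁ w₂ hw₂ a b ha hb hab
          simp only [Set.mem_setOf_eq] at *
          rw [inner_add_left, real_inner_smul_left, real_inner_smul_left]
          positivity
      have h1 : 0 ≤ ⟪(⟪y, u⟫)⁻¹ • y, x⟫ := hT hmem'
      rw [real_inner_smul_left] at h1
      nlinarith [h1, hpos, inv_pos.mpr hpos]

theorem euclid_main {D : Set E} (hD : IsClosedCone D) (hnp : ¬IsPolyhedral D)
    (hint : (interior D).Nonempty) :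
    ∃ f : E → E, Set.MapsTo f D D ∧ ContinuousOn f D ∧ IsHomog D f ∧ IsOrdPres D f ∧
      (coneSpectrum D f).Infinite := by
  classical
  obtain ⟨u, hu⟩ := hint
  obtain ⟨r, hr, hball⟩ : ∃ r > 0, Metric.ball u r ⊆ D := by
    obtain ⟨r, hr, hball⟩ := Metric.mem_nhds_iff.mp (mem_interior_iff_mem_nhds.mp hu)
    exact ⟨r, hr, hball⟩
  have huD : u ∈ D := interior_subset hu
  have h0 : (0:E) ∈ D := cone_zero_mem hD ⟨u, huD⟩
  -- infinitely many exposed points of the dual base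
  have hinf : ((dbase D u).exposedPoints ℝ).Infinite := by
    by_contra hfin
    rw [Set.not_infinite] at hfin
    exact hnp (polyhedral_of_finite_exposed hD h0 hr hball hfin)
  have hBc : IsCompact (dbase D u) := dbase_isCompact hr hball
  -- an injective sequence of exposed points converging to vstar ≠ each term
  set emb : ℕ ↪ ↥((dbase D u).exposedPoints ℝ) := hinf.natEmbedding with hemb
  set w : ℕ → E := fun n => (emb n : E) with hw
  have hwinj : Function.Injective w := fun a b hab => by
    have := emb.injective (Subtype.ext hab)
    exact this
  have hwT : ∀ n, w n ∈ (dbase D u).exposedPoints ℝ := fun n => (emb n).2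
  have hwB : ∀ n, w n ∈ dbase D u := fun n => exposedPoints_subset (hwT n)
  obtain ⟨vstar, hvstarB, φ, hφ, hφtend⟩ := hBc.tendsto_subseq hwB
  have hvex : ∃ v : ℕ → E, Function.Injective v ∧ (∀ n, v n ∈ (dbase D u).exposedPoints ℝ) ∧
      Filter.Tendsto v Filter.atTop (𝓝 vstar) ∧ ∀ n, v n ≠ vstar := by
    by_cases hbad : ∃ k, w (φ k) = vstar
    · obtain ⟨k₀, hk₀⟩ := hbad
      refine ⟨fun n => w (φ (n + (k₀+1))), ?_, fun n => hwT _, ?_, ?_⟩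
      · intro a b hab
        have := hφ.injective (hwinj hab)
        omega
      · exact hφtend.comp (tendsto_add_atTop_nat (k₀+1))
      · intro n hn
        rw [← hk₀] at hn
        have := hφ.injective (hwinj hn)
        omega
    · push_neg at hbad
      exact ⟨w ∘ φ, hwinj.comp hφ.injective, fun n => hwT _, hφtend, fun n => hbad n⟩
  obtain ⟨v, hvinj, hvT, hvtend, hvne⟩ := hvex
  have hvB : ∀ n, v n ∈ dbase D u := fun n => exposedPoints_subset (hvT n)
  -- exposing functionals
  have hexp : ∀ n, ∃ l : E →L[ℝ] ℝ, ∀ y ∈ dbase D u,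
      l y ≤ l (v n) ∧ (l (v n) ≤ l y → y = v n) := fun n => (exposed_point_def.mp (hvT n)).2
  choose l hl using hexp
  -- the points p n
  set p : ℕ → E := fun n => (l n (v n)) • u - (InnerProductSpace.toDual ℝ E).symm (l n) with hp
  have hpeval : ∀ n (y : E), ⟪y, p n⟫ = l n (v n) * ⟪y, u⟫ - l n y := by
    intro n y
    rw [hp]
    simp only
    rw [inner_sub_right, real_inner_smul_right]
    congr 1
    rw [real_inner_comm]
    exact InnerProductSpace.toDual_symm_apply
  have hpB : ∀ n, ∀ y ∈ dbase D u, ⟪y, p n⟫ = l n (v n) - l n y := by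
    intro n y hy
    rw [hpeval n y, hy.2, mul_one]
  have hpdual : ∀ n, ∀ y ∈ dualSet D, 0 ≤ ⟪y, p n⟫ := by
    intro n y hy
    rcases eq_or_ne y 0 with rfl | hy0
    · simp
    · obtain ⟨hpos, hmem⟩ := dbase_scale hr hball hy hy0
      have h1 : 0 ≤ ⟪(⟪y, u⟫)⁻¹ • y, p n⟫ := by
        rw [hpB n _ hmem]
        linarith [(hl n _ hmem).1]
      rw [real_inner_smul_left] at h1
      nlinarith [inv_pos.mpr hpos]
  have hpD : ∀ n, p n ∈ D := fun n => mem_of_forall_dual hD h0 (hpdual n)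
  have hvn0 : ∀ n, ⟪v n, p n⟫ = 0 := by
    intro n
    rw [hpB n _ (hvB n)]; ring
  have hvm : ∀ m n, m ≠ n → 0 < ⟪v m, p n⟫ := by
    intro m n hmn
    rw [hpB n _ (hvB m)]
    rcases lt_or_eq_of_le ((hl n _ (hvB m)).1) with h | h
    · linarith
    · exact absurd ((hl n _ (hvB m)).2 (le_of_eq h.symm)) (fun he => hmn (hvinj he))
  have hvstarp : ∀ n, 0 < ⟪vstar, p n⟫ := by
    intro n
    rw [hpB n _ hvstarB]
    rcases lt_or_eq_of_le ((hl n _ hvstarB).1) with h | h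
    · linarith
    · exact absurd ((hl n _ hvstarB).2 (le_of_eq h.symm)) (fun he => hvne n he.symm)
  have hpne : ∀ n, p n ≠ 0 := by
    intro n hn
    have := hvstarp n
    rw [hn, inner_zero_right] at this
    exact lt_irrefl 0 this
  -- normalized eigenvector candidates
  set xs : ℕ → E := fun n => ‖p n‖⁻¹ • p n with hxs
  have hpnorm : ∀ n, 0 < ‖p n‖ := fun n => norm_pos_iff.mpr (hpne n)
  have hxsD : ∀ n, xs n ∈ D := fun n => hD.2.2.1 _ (by positivity) _ (hpD n)
  have hxs1 : ∀ n, ‖xs n‖ = 1 := by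
    intro n
    rw [hxs]
    simp only
    rw [norm_smul, norm_inv, norm_norm, inv_mul_cancel₀ (ne_of_gt (hpnorm n))]
  have hxsne : ∀ n, xs n ≠ 0 := fun n hn => by
    have := hxs1 n; rw [hn, norm_zero] at this; norm_num at this
  have hxseval : ∀ n (y : E), ⟪y, xs n⟫ = ‖p n‖⁻¹ * ⟪y, p n⟫ := by
    intro n y
    rw [hxs]
    simp only
    rw [real_inner_smul_right]
  -- the functionals family
  set q : ℕ → ℕ → E := fun j i => if i = j then vstar else v i with hq
  have hqB : ∀ j i, q j i ∈ dbase D u := by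
    intro j i
    rw [hq]
    by_cases hij : i = j <;> simp [hij, hvstarB, hvB]
  have hqdual : ∀ j i, q j i ∈ dualSet D := fun j i => (hqB j i).1
  set RB : ℝ := 2/r with hRB
  have hRBpos : 0 < RB := by positivity
  have hnormB : ∀ y ∈ dbase D u, ‖y‖ ≤ RB := by
    intro y hy
    have := dual_norm_le hr hball y hy.1
    rw [hy.2] at this
    rw [hRB, le_div_iff₀ hr]
    nlinarith
  have hqnorm : ∀ j i, ‖q j i‖ ≤ RB := fun j i => hnormB _ (hqB j i)
  -- the coefficient functions
  set h : ℕ → E → ℝ := fun j x => ⨅ i, ⟪q j i, x⟫ with hh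
  have hbdd : ∀ j x, BddBelow (Set.range fun i => ⟪q j i, x⟫) := by
    intro j x
    refine ⟨-(RB * ‖x‖), fun t ht => ?_⟩
    obtain ⟨i, rfl⟩ := ht
    have h1 := abs_real_inner_le_norm (q j i) x
    have h2 := mul_le_mul_of_nonneg_right (hqnorm j i) (norm_nonneg x)
    have := neg_abs_le ⟪q j i, x⟫
    linarith [abs_nonneg ⟪q j i, x⟫]
  have hle : ∀ j x (i : ℕ), h j x ≤ ⟪q j i, x⟫ := fun j x i => ciInf_le (hbdd j x) i
  have hge : ∀ j x (c : ℝ), (∀ i, c ≤ ⟪q j i, x⟫) → c ≤ h j x := fun j x c hc => le_ciInf hc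
  have hnonneg : ∀ j, ∀ x ∈ D, 0 ≤ h j x := fun j x hx =>
    hge j x 0 fun i => hqdual j i x hx
  have habs : ∀ j x, |h j x| ≤ RB * ‖x‖ := by
    intro j x
    rw [abs_le]
    constructor
    · refine hge j x _ fun i => ?_
      have h1 := abs_real_inner_le_norm (q j i) x
      have h2 := mul_le_mul_of_nonneg_right (hqnorm j i) (norm_nonneg x)
      have h3 := neg_abs_le ⟪q j i, x⟫
      linarith
    · refine le_trans (hle j x j) ?_
      have h1 := real_inner_le_norm (q j j) x
      have h2 := mul_le_mul_of_nonneg_right (hqnorm j j) (norm_nonneg x)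
      linarith
  -- h j vanishes at xs i for i ≠ j
  have hzero : ∀ j i, i ≠ j → h j (xs i) = 0 := by
    intro j i hij
    refine le_antisymm ?_ (hnonneg j _ (hxsD i))
    have := hle j (xs i) i
    rw [hq] at this
    simp only [if_neg hij] at this
    rw [hxseval i (v i), hvn0 i, mul_zero] at this
    exact this
  -- h j positive at xs j
  have hpos : ∀ j, 0 < h j (xs j) := by
    intro j
    set cst : ℝ := ⟪vstar, xs j⟫ with hcst
    have hcstpos : 0 < cst := by
      rw [hcst, hxseval]
      exact mul_pos (inv_pos.mpr (hpnorm j)) (hvstarp j)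
    have htendinner : Filter.Tendsto (fun i => ⟪v i, xs j⟫) Filter.atTop (𝓝 cst) := by
      have hcont : Continuous fun y : E => ⟪y, xs j⟫ :=
        (continuous_id).inner continuous_const
      exact (hcont.tendsto vstar).comp hvtend
    obtain ⟨N, hN⟩ := Filter.eventually_atTop.mp
      (htendinner.eventually (eventually_gt_nhds (show cst/2 < cst by linarith)))
    have hapos : ∀ i, 0 < ⟪q j i, xs j⟫ := by
      intro i
      rw [hq]
      by_cases hij : i = j
      · simp only [if_pos hij]; exact hcstpos
      · simp only [if_neg hij]
        rw [hxseval]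
        exact mul_pos (inv_pos.mpr (hpnorm j)) (hvm i j hij)
    set M : ℝ := (Finset.range (N+1)).inf' (by simp) (fun i => ⟪q j i, xs j⟫) with hM
    have hMpos : 0 < M := by
      rw [hM, Finset.lt_inf'_iff]
      exact fun i _ => hapos i
    have hlb : ∀ i, min M (cst/2) ≤ ⟪q j i, xs j⟫ := by
      intro i
      rcases le_or_gt i N with hiN | hiN
      · exact le_trans (min_le_left _ _)
          (Finset.inf'_le _ (Finset.mem_range.mpr (by omega)))
      · rcases eq_or_ne i j with rfl | hij
        · exact le_trans (min_le_right _ _) (by rw [hq]; simp; linarith [hcstpos])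
        · refine le_trans (min_le_right _ _) ?_
          have := hN i (by omega)
          rw [hq]
          simp only [if_neg hij]
          linarith
    have := hge j (xs j) _ hlb
    have hmin : 0 < min M (cst/2) := lt_min hMpos (by linarith)
    linarith
  -- Lipschitz continuity of h j
  have hlipineq : ∀ j (x y : E), h j x ≤ h j y + RB * ‖x - y‖ := by
    intro j x y
    have : h j x - RB * ‖x - y‖ ≤ h j y := by
      refine hge j y _ fun i => ?_
      have h1 : ⟪q j i, x⟫ - ⟪q j i, y⟫ = ⟪q j i, x - y⟫ := (inner_sub_right _ _ _).symm
      have h2 : ⟪q j i, x - y⟫ ≤ ‖q j i‖ * ‖x - y‖ := real_inner_le_norm _ _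
      have h3 := mul_le_mul_of_nonneg_right (hqnorm j i) (norm_nonneg (x - y))
      have h4 := hle j x i
      linarith
    linarith
  have hcont : ∀ j, Continuous (h j) := by
    intro j
    refine (LipschitzWith.of_dist_le_mul (K := Real.toNNReal RB) fun x y => ?_).continuous
    rw [Real.dist_eq, dist_eq_norm, Real.coe_toNNReal _ (le_of_lt hRBpos), abs_le]
    constructor
    · have := hlipineq j y x
      rw [norm_sub_rev] at this
      linarith
    · linarith [hlipineq j x y]
  -- monotone
  have hmono : ∀ j (x y : E), y - x ∈ D → h j x ≤ h j y := by
    intro j x y hxy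
    refine ciInf_mono (hbdd j x) fun i => ?_
    have h1 : ⟪q j i, y⟫ - ⟪q j i, x⟫ = ⟪q j i, y - x⟫ := (inner_sub_right _ _ _).symm
    have h2 := hqdual j i _ hxy
    linarith
  -- homogeneous
  have hhomog : ∀ j (a : ℝ), 0 ≤ a → ∀ x, h j (a • x) = a * h j x := by
    intro j a ha x
    rw [hh]
    simp only
    rw [Real.mul_iInf_of_nonneg ha]
    congr 1
    ext i
    rw [real_inner_smul_right]
  -- the map f
  set F : ℕ → E → E := fun j x => ((1/2:ℝ)^j * h j x) • xs j with hF
  have hFnorm : ∀ j x, ‖F j x‖ ≤ (1/2:ℝ)^j * (RB * ‖x‖) := by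
    intro j x
    rw [hF]
    simp only
    rw [norm_smul, hxs1 j, mul_one, Real.norm_eq_abs, abs_mul, abs_pow]
    have : |(1/2:ℝ)| = 1/2 := by norm_num
    rw [this]
    exact mul_le_mul_of_nonneg_left (habs j x) (by positivity)
  have hgeom : Summable (fun j : ℕ => ((1/2:ℝ))^j) :=
    summable_geometric_of_lt_one (by norm_num) (by norm_num)
  have hFsummable : ∀ x, Summable (fun j => F j x) := by
    intro x
    refine Summable.of_norm_bounded (g := fun j => (1/2:ℝ)^j * (RB * ‖x‖)) ?_ (fun j => hFnorm j x)
    exact hgeom.mul_right _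
  set f : E → E := fun x => ∑' j, F j x with hf
  have hFmem : ∀ j, ∀ x ∈ D, F j x ∈ D := by
    intro j x hx
    exact hD.2.2.1 _ (mul_nonneg (by positivity) (hnonneg j x hx)) _ (hxsD j)
  refine ⟨f, ?_, ?_, ?_, ?_, ?_⟩
  · -- MapsTo
    intro x hx
    exact cone_tsum_mem hD h0 (hFsummable x) (fun j => hFmem j x hx)
  · -- ContinuousOn
    have hfc : Continuous f := by
      rw [continuous_iff_continuousAt]
      intro x₀
      have hcball : ContinuousOn f (Metric.ball 0 (‖x₀‖ + 1)) := by
        refine continuousOn_tsum (fun i => ?_)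
          ((hgeom.mul_right (RB * (‖x₀‖ + 1)))) (fun i x hx => ?_)
        · exact ((continuous_const.mul (hcont i)).smul continuous_const).continuousOn
        · refine le_trans (hFnorm i x) ?_
          rw [Metric.mem_ball, dist_zero_right] at hx
          exact mul_le_mul_of_nonneg_left
            (mul_le_mul_of_nonneg_left (le_of_lt hx) (le_of_lt hRBpos)) (by positivity)
      refine hcball.continuousAt (Metric.isOpen_ball.mem_nhds ?_)
      rw [Metric.mem_ball, dist_zero_right]
      linarith [norm_nonneg x₀]
    exact hfc.continuousOn
  · -- IsHomog
    intro a ha x hx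
    rw [hf]
    simp only
    have : ∀ j, F j (a • x) = a • F j x := by
      intro j
      rw [hF]
      simp only
      rw [hhomog j a ha x]
      module
    rw [tsum_congr this]
    exact Summable.tsum_const_smul a (hFsummable x)
  · -- IsOrdPres
    intro x hx y hy hxy
    unfold coneLE at *
    have heq : f y - f x = ∑' j, (F j y - F j x) :=
      (Summable.tsum_sub (hFsummable y) (hFsummable x)).symm
    rw [heq]
    refine cone_tsum_mem hD h0 ((hFsummable y).sub (hFsummable x)) (fun j => ?_)
    have : F j y - F j x = (((1/2:ℝ))^j * (h j y - h j x)) • xs j := by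
      rw [hF]
      simp only
      rw [← sub_smul]
      congr 1
      ring
    rw [this]
    exact hD.2.2.1 _ (mul_nonneg (by positivity) (by linarith [hmono j x y hxy])) _ (hxsD j)
  · -- infinite spectrum
    set ρ : ℕ → ℝ := fun i => ((1/2:ℝ))^i * h i (xs i) with hρ
    have hρpos : ∀ i, 0 < ρ i := fun i => mul_pos (by positivity) (hpos i)
    have hρle : ∀ i, ρ i ≤ ((1/2:ℝ))^i * RB := by
      intro i
      refine mul_le_mul_of_nonneg_left ?_ (by positivity)
      have := habs i (xs i)
      rw [hxs1 i, mul_one] at this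
      exact le_trans (le_abs_self _) this
    have heig : ∀ i, f (xs i) = ρ i • xs i := by
      intro i
      have hzz : ∀ (j:ℕ), j ≠ i → F j (xs i) = 0 := by
        intro j hji
        rw [hF]
        simp only
        rw [hzero j i (Ne.symm hji), mul_zero, zero_smul]
      have h1 : f (xs i) = F i (xs i) := by
        rw [hf]
        exact tsum_eq_single i hzz
      rw [h1, hF, hρ]
    have hρmem : ∀ i, ρ i ∈ coneSpectrum D f := by
      intro i
      exact ⟨le_of_lt (hρpos i), xs i, hxsD i, hxsne i, heig i⟩
    have hrange : (Set.range ρ).Infinite := by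
      intro hfin
      have hne : (hfin.toFinset).Nonempty := by
        rw [Set.Finite.toFinset_nonempty]
        exact ⟨ρ 0, 0, rfl⟩
      set δ : ℝ := hfin.toFinset.min' hne with hδ
      have hδpos : 0 < δ := by
        have hmem := hfin.toFinset.min'_mem hne
        rw [Set.Finite.mem_toFinset] at hmem
        obtain ⟨i, hi⟩ := hmem
        rw [hδ, ← hi]; exact hρpos i
      obtain ⟨n, hn⟩ := exists_pow_lt_of_lt_one (div_pos hδpos hRBpos)
        (show (1/2:ℝ) < 1 by norm_num)
      have h1 : ((1/2:ℝ))^n * RB < δ := by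
        rw [← lt_div_iff₀ hRBpos]; exact hn
      have h2 : δ ≤ ρ n := hfin.toFinset.min'_le _
        (by rw [Set.Finite.mem_toFinset]; exact ⟨n, rfl⟩)
      linarith [hρle n]
    exact hrange.mono (Set.range_subset_iff.mpr hρmem)

end Euclid

/-- On every closed non-polyhedral cone with non-empty interior in a finite dimensional
real vector space there exists a continuous order-preserving homogeneous map with
infinitely many distinct eigenvalues, i.e. with infinite cone spectrum. -/
theorem exists_infinite_coneSpectrum_of_not_polyhedral
    (C : Set V) (hC : IsClosedCone C) (hnonpoly : ¬IsPolyhedral C)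
    (hint : (interior C).Nonempty) :
    ∃ f : V → V, Set.MapsTo f C C ∧ ContinuousOn f C ∧ IsHomog C f ∧ IsOrdPres C f ∧
      (coneSpectrum C f).Infinite := by
  classical
  set e : V ≃L[ℝ] EuclideanSpace ℝ (Fin (Module.finrank ℝ V)) := toEuclidean with he
  set D : Set (EuclideanSpace ℝ (Fin (Module.finrank ℝ V))) := e '' C with hD
  have hmemD : ∀ x : V, e x ∈ D ↔ x ∈ C := by
    intro x
    constructor
    · rintro ⟨x', hx', hxx'⟩
      have : x' = x := e.injective hxx'
      rwa [← this]
    · intro hx; exact ⟨x, hx, rfl⟩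
  have hDcone : IsClosedCone D := by
    refine ⟨?_, ?_, ?_, ?_⟩
    · rw [hD]
      exact (e.toHomeomorph.isClosedMap) _ hC.1
    · rintro x ⟨xc, hxc, rfl⟩ y ⟨yc, hyc, rfl⟩ a b ha hb hab
      refine ⟨a • xc + b • yc, hC.2.1 hxc hyc ha hb hab, ?_⟩
      simp [map_add, map_smul]
    · rintro a ha x ⟨xc, hxc, rfl⟩
      exact ⟨a • xc, hC.2.2.1 a ha xc hxc, by simp [map_smul]⟩
    · rintro x ⟨xc, hxc, rfl⟩ hnx
      have : -xc ∈ C := by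
        rw [← hmemD]
        simpa [map_neg] using hnx
      rw [hC.2.2.2 xc hxc this, map_zero]
  have hDint : (interior D).Nonempty := by
    obtain ⟨x, hx⟩ := hint
    refine ⟨e x, ?_⟩
    have hopen : IsOpenMap (⇑e) := e.toHomeomorph.isOpenMap
    exact hopen.image_interior_subset C ⟨x, hx, rfl⟩
  have hDnp : ¬IsPolyhedral D := by
    rintro ⟨m, φ, hφ⟩
    refine hnonpoly ⟨m, fun i => (φ i).comp (e.toLinearMap), ?_⟩
    ext x
    simp only [Set.mem_setOf_eq, LinearMap.comp_apply]
    rw [← hmemD, hφ]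
    rfl
  obtain ⟨g, hgmaps, hgcont, hghom, hgord, hgspec⟩ := euclid_main hDcone hDnp hDint
  refine ⟨fun x => e.symm (g (e x)), ?_, ?_, ?_, ?_, ?_⟩
  · intro x hx
    have := hgmaps ((hmemD x).mpr hx)
    obtain ⟨z, hz, hze⟩ := this
    simp only [Set.mem_setOf_eq]
    rw [← hze, e.symm_apply_apply]
    exact hz
  · refine e.symm.continuous.comp_continuousOn ?_
    refine hgcont.comp e.continuous.continuousOn ?_
    intro x hx
    exact (hmemD x).mpr hx
  · intro a ha x hx
    show e.symm (g (e (a • x))) = a • e.symm (g (e x))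
    rw [map_smul, hghom a ha (e x) ((hmemD x).mpr hx), map_smul]
  · intro x hx y hy hxy
    unfold coneLE at *
    have h1 : e y - e x ∈ D := by
      rw [← map_sub, hmemD]
      exact hxy
    have h2 := hgord (e x) ((hmemD x).mpr hx) (e y) ((hmemD y).mpr hy) h1
    unfold coneLE at h2
    obtain ⟨z, hz, hze⟩ := h2
    have : e.symm (g (e y)) - e.symm (g (e x)) = z := by
      rw [← map_sub, ← hze, e.symm_apply_apply]
    rw [this]
    exact hz
  · refine hgspec.mono ?_
    rintro ρ ⟨hρ0, y, hyD, hyne, heq⟩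
    obtain ⟨x, hxC, rfl⟩ := hyD
    refine ⟨hρ0, x, hxC, ?_, ?_⟩
    · intro hx0
      rw [hx0, map_zero] at hyne
      exact hyne rfl
    · show e.symm (g (e x)) = ρ • x
      rw [heq, map_smul, e.symm_apply_apply]
end
end
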